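/- Let π : H → ℤ be any function satisfying π(t^p · b^q · ι(w)) = q for all p, q ∈ ℤ and all w ∈ F₂ not beginning with b^{±1}. Then for all u, u' ∈ H the following are equivalent: (1) π(u⁻¹ · u' · bⁿ) = π(u⁻¹ · u') + n for all n ∈ ℤ; (2) π(u'⁻¹ · u · bⁿ) = π(u'⁻¹ · u) + n for all n ∈ ℤ; (3) there exist p, q ∈ ℤ with u' = u · t^p · b^q. (This shows the relation of parallelism between the cosets u⟨b⟩ and u'⟨b⟩ is symmetric.) -/

import Mathlib

/-- Generators of `H`: `a = 0`, `b = 1`, `t = 2`.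
Relators: `t·b·t⁻¹·b⁻¹` and `t·a·t⁻¹·a⁻¹·b⁻¹`. -/
def hRels : Set (FreeGroup (Fin 3)) :=
  { FreeGroup.of (2 : Fin 3) * FreeGroup.of (1 : Fin 3) * (FreeGroup.of (2 : Fin 3))⁻¹ *
      (FreeGroup.of (1 : Fin 3))⁻¹,
    FreeGroup.of (2 : Fin 3) * FreeGroup.of (0 : Fin 3) * (FreeGroup.of (2 : Fin 3))⁻¹ *
      (FreeGroup.of (0 : Fin 3))⁻¹ * (FreeGroup.of (1 : Fin 3))⁻¹ }

/-- The group `H = ⟨a, b, t ∣ t·b·t⁻¹ = b, t·a·t⁻¹ = b·a⟩`. -/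
abbrev HGrp : Type := PresentedGroup hRels

/-- The image of the generator `a` in `H`. -/
def aH : HGrp := PresentedGroup.of 0
/-- The image of the generator `b` in `H`. -/
def bH : HGrp := PresentedGroup.of 1
/-- The image of the generator `t` in `H`. -/
def tH : HGrp := PresentedGroup.of 2

/-- The free group on two generators `a = 0`, `b = 1`. -/
abbrev F₂ : Type := FreeGroup (Fin 2)

/-- `w ∈ F₂` does not begin with `b` or `b⁻¹`: the first letter of its reduced word
(if any) is not the generator `b = 1`. -/
def NoLeadB (w : F₂) : Prop := ∀ l ∈ w.toWord.head?, l.1 ≠ (1 : Fin 2)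

/-- The homomorphism `ι : F₂ →* H` sending the generators `a`, `b` of `F₂` to the
elements `a`, `b` of `H`. -/
def ι : F₂ →* HGrp := FreeGroup.lift (fun i => if i = 0 then aH else bH)

/-! ### Auxiliary results on reduced words -/

section Red
open FreeGroup List

variable {α : Type*} [DecidableEq α]

/-- The adjacency relation characterising reduced words. -/
def RR : (α × Bool) → (α × Bool) → Prop := fun x y => ¬(x.1 = y.1 ∧ x.2 = !y.2)

lemma reduce_eq_of_chain' : ∀ {l : List (α × Bool)}, l.Chain' RR → FreeGroup.reduce l = l
  | [], _ => rfl
  | x :: l, h => by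
    have hl : FreeGroup.reduce l = l := by
      have := reduce_eq_of_chain' h.tail
      simpa using this
    rw [FreeGroup.reduce.cons, hl]
    cases l with
    | nil => rfl
    | cons y t =>
      have hxy : RR x y := (List.isChain_cons_cons.mp h).1
      simp only [RR] at hxy
      simp [hxy]

lemma chain'_of_reduce_eq : ∀ {l : List (α × Bool)}, FreeGroup.reduce l = l → l.Chain' RR := by
  intro l
  induction l with
  | nil => intro _; exact List.isChain_nil
  | cons x l ih =>
    intro h
    rw [FreeGroup.reduce.cons] at h
    rcases hr : FreeGroup.reduce l with _ | ⟨y, t⟩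
    · rw [hr] at h
      simp only at h
      injection h with h1 h2
      subst h2
      exact List.isChain_singleton _
    · rw [hr] at h
      simp only at h
      by_cases hc : x.1 = y.1 ∧ x.2 = !y.2
      · rw [if_pos hc] at h
        exfalso
        have hlen : (FreeGroup.reduce l).length ≤ l.length :=
          FreeGroup.Red.length_le (FreeGroup.reduce.red)
        rw [hr] at hlen
        have := congrArg List.length h
        simp at this hlen
        omega
      · rw [if_neg hc] at h
        have hl : l = y :: t := by
          injection h with h1 h2
          exact h2.symm
        have hch := ih (by rw [hr, hl])
        rw [hl]
        exact List.isChain_cons_cons.mpr ⟨hc, by rwa [hl] at hch⟩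

lemma toWord_chain' (w : FreeGroup α) : w.toWord.Chain' RR :=
  chain'_of_reduce_eq (FreeGroup.reduce_toWord w)

lemma toWord_mk_of_chain' {l : List (α × Bool)} (h : l.Chain' RR) :
    (FreeGroup.mk l).toWord = l := by rw [FreeGroup.toWord_mk, reduce_eq_of_chain' h]

end Red

/-! ### Decomposition of elements of `F₂` -/

lemma noLeadB_one : NoLeadB 1 := by
  intro l hl
  rw [FreeGroup.toWord_one] at hl
  simp at hl

lemma of_eq_mk (a : Fin 2) : FreeGroup.of a = FreeGroup.mk [(a, true)] := rfl

lemma mk_single_false : FreeGroup.mk [((1 : Fin 2), false)] = (FreeGroup.of (1 : Fin 2))⁻¹ := by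
  rw [of_eq_mk, FreeGroup.inv_mk]
  rfl

lemma mk_single_zpow : ∀ s : Bool,
    FreeGroup.mk [((1 : Fin 2), s)] = (FreeGroup.of (1 : Fin 2)) ^ (if s then (1 : ℤ) else -1)
  | true => by simp [FreeGroup.of]
  | false => by simp [mk_single_false]

/-- Strip leading `b`-powers from a reduced word. -/
lemma decomp_aux : ∀ (l : List (Fin 2 × Bool)), l.Chain' RR →
    ∃ (q : ℤ) (w' : F₂), NoLeadB w' ∧ FreeGroup.mk l = (FreeGroup.of (1 : Fin 2)) ^ q * w' := by
  intro l
  induction l with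
  | nil => exact fun _ => ⟨0, 1, noLeadB_one, by simp [FreeGroup.one_eq_mk]⟩
  | cons x l ih =>
    intro h
    by_cases hx : x.1 = (1 : Fin 2)
    · obtain ⟨q, w', hw', he⟩ := ih h.tail
      refine ⟨(if x.2 then (1 : ℤ) else -1) + q, w', hw', ?_⟩
      have hx2 : x = ((1 : Fin 2), x.2) := Prod.ext hx rfl
      calc FreeGroup.mk (x :: l) = FreeGroup.mk [x] * FreeGroup.mk l := by
            rw [FreeGroup.mul_mk]; rfl
        _ = (FreeGroup.of (1 : Fin 2)) ^ (if x.2 then (1 : ℤ) else -1) *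
              ((FreeGroup.of (1 : Fin 2)) ^ q * w') := by
            rw [hx2, mk_single_zpow, he]
        _ = (FreeGroup.of (1 : Fin 2)) ^ ((if x.2 then (1 : ℤ) else -1) + q) * w' := by
            rw [← mul_assoc, ← zpow_add]
    · refine ⟨0, FreeGroup.mk (x :: l), ?_, by rw [zpow_zero, one_mul]⟩
      intro y hy
      rw [toWord_mk_of_chain' h] at hy
      simp at hy
      rw [← hy]
      exact hx

lemma exists_decomp (w : F₂) : ∃ (q : ℤ) (w' : F₂), NoLeadB w' ∧
    w = (FreeGroup.of (1 : Fin 2)) ^ q * w' := by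
  have := decomp_aux w.toWord (toWord_chain' w)
  rwa [FreeGroup.mk_toWord] at this

/-- Multiplying a nontrivial word with no leading `b` by `b` keeps no leading `b`. -/
lemma noLeadB_mul_b {w : F₂} (hw : NoLeadB w) (h1 : w ≠ 1) :
    NoLeadB (w * FreeGroup.of (1 : Fin 2)) := by
  have hL : w.toWord ≠ [] := fun h => h1 (FreeGroup.toWord_eq_nil_iff.mp h)
  have hch : w.toWord.Chain' RR := toWord_chain' w
  have hmul : w * FreeGroup.of (1 : Fin 2) =
      FreeGroup.mk (w.toWord ++ [((1 : Fin 2), true)]) := by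
    conv_lhs => rw [← FreeGroup.mk_toWord (x := w)]
    rw [of_eq_mk, FreeGroup.mul_mk]
  rcases List.eq_nil_or_concat w.toWord with h | ⟨L', y, hLy⟩
  · exact absurd h hL
  rw [List.concat_eq_append] at hLy
  by_cases hy : y = ((1 : Fin 2), false)
  · -- cancellation with the last letter
    have hL' : L' ≠ [] := by
      rintro rfl
      have : w.toWord.head? = some y := by rw [hLy]; rfl
      exact hw y (by rw [this]; rfl) (by rw [hy])
    have hmk : FreeGroup.mk (w.toWord ++ [((1 : Fin 2), true)]) = FreeGroup.mk L' := by
      rw [hLy, hy]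
      have : (L' ++ [((1 : Fin 2), false)]) ++ [((1 : Fin 2), true)]
          = L' ++ ((1 : Fin 2), false) :: ((1 : Fin 2), !false) :: [] := by simp
      rw [this]
      have hstep := @FreeGroup.Red.Step.not (Fin 2) L' [] 1 false
      have h2 := FreeGroup.reduce.Step.eq hstep
      have h3 := FreeGroup.reduce.exact
        (L₁ := L' ++ ((1 : Fin 2), false) :: ((1 : Fin 2), !false) :: []) (L₂ := L' ++ []) h2
      simpa using h3
    have hchL' : L'.Chain' RR := hch.prefix ⟨[y], hLy.symm⟩
    intro z hz
    rw [hmul, hmk, toWord_mk_of_chain' hchL'] at hz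
    apply hw z
    rcases L' with _ | ⟨a, t⟩
    · exact absurd rfl hL'
    · rw [hLy]
      simpa using hz
  · -- no cancellation
    have hchain : (w.toWord ++ [((1 : Fin 2), true)]).Chain' RR := by
      refine List.isChain_append.mpr ?_
      refine ⟨hch, List.isChain_singleton _, ?_⟩
      intro a ha c hc
      rw [hLy] at ha
      simp at ha hc
      subst hc
      intro hcon
      apply hy
      rw [ha]
      exact Prod.ext hcon.1 (by simpa using hcon.2)
    intro z hz
    rw [hmul, toWord_mk_of_chain' hchain] at hz
    apply hw z
    rcases hW : w.toWord with _ | ⟨a, t⟩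
    · exact absurd hW hL
    · rw [hW] at hz
      simpa using hz

/-! ### Structure of `HGrp` -/

lemma mk_rel_one {r : FreeGroup (Fin 3)} (hr : r ∈ hRels) : PresentedGroup.mk hRels r = 1 :=
  (QuotientGroup.eq_one_iff r).mpr (Subgroup.subset_normalClosure hr)

lemma rel_tb : tH * bH = bH * tH := by
  have h := mk_rel_one (r := FreeGroup.of (2 : Fin 3) * FreeGroup.of (1 : Fin 3) *
      (FreeGroup.of (2 : Fin 3))⁻¹ * (FreeGroup.of (1 : Fin 3))⁻¹) (Set.mem_insert _ _)
  simp only [map_mul, map_inv] at h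
  have h' : tH * bH * tH⁻¹ * bH⁻¹ = 1 := h
  have h2 : tH * bH * tH⁻¹ = bH := by
    rw [mul_inv_eq_one] at h'
    exact h'
  calc tH * bH = tH * bH * tH⁻¹ * tH := by group
    _ = bH * tH := by rw [h2]

lemma rel_ta : tH * aH * tH⁻¹ = bH * aH := by
  have h := mk_rel_one (r := FreeGroup.of (2 : Fin 3) * FreeGroup.of (0 : Fin 3) *
      (FreeGroup.of (2 : Fin 3))⁻¹ * (FreeGroup.of (0 : Fin 3))⁻¹ * (FreeGroup.of (1 : Fin 3))⁻¹)
      (Set.mem_insert_of_mem _ rfl)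
  simp only [map_mul, map_inv] at h
  have h' : tH * aH * tH⁻¹ * aH⁻¹ * bH⁻¹ = 1 := h
  calc tH * aH * tH⁻¹ = (tH * aH * tH⁻¹ * aH⁻¹ * bH⁻¹) * (bH * aH) := by group
    _ = bH * aH := by rw [h']; group

lemma ι_of_zero : ι (FreeGroup.of (0 : Fin 2)) = aH := by simp [ι]
lemma ι_of_one : ι (FreeGroup.of (1 : Fin 2)) = bH := by simp [ι]

/-- The automorphism `a ↦ ba`, `b ↦ b` of `F₂` (conjugation by `t`). -/
def φ : F₂ →* F₂ :=
  FreeGroup.lift (fun i => if i = 0 then FreeGroup.of (1 : Fin 2) * FreeGroup.of (0 : Fin 2)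
    else FreeGroup.of (1 : Fin 2))

/-- The endomorphism `a ↦ b⁻¹a`, `b ↦ b` of `F₂` (conjugation by `t⁻¹`). -/
def φ' : F₂ →* F₂ :=
  FreeGroup.lift (fun i => if i = 0 then (FreeGroup.of (1 : Fin 2))⁻¹ * FreeGroup.of (0 : Fin 2)
    else FreeGroup.of (1 : Fin 2))

lemma conj_t (v : F₂) : tH * ι v * tH⁻¹ = ι (φ v) := by
  have : (MulAut.conj tH).toMonoidHom.comp ι = ι.comp φ := by
    apply FreeGroup.ext_hom
    intro a
    fin_cases a
    · simp [φ, ι_of_zero, MulAut.conj_apply, map_mul, ι_of_one, rel_ta]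
    · simpa [φ, ι_of_one, MulAut.conj_apply] using
        (by rw [rel_tb]; group : tH * bH * tH⁻¹ = bH)
  have := congrFun (congrArg (·.toFun) this) v
  simpa [MulAut.conj_apply, mul_assoc] using this

lemma conj_t' (v : F₂) : tH⁻¹ * ι v * tH = ι (φ' v) := by
  have : (MulAut.conj tH⁻¹).toMonoidHom.comp ι = ι.comp φ' := by
    apply FreeGroup.ext_hom
    intro a
    fin_cases a
    · have ha : tH⁻¹ * aH * tH = bH⁻¹ * aH := by
        have h2 : tH * (bH⁻¹ * aH) = aH * tH := by
          calc tH * (bH⁻¹ * aH) = (tH * bH⁻¹) * aH := by rw [mul_assoc]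
            _ = (bH⁻¹ * tH) * aH := by
                have hc : Commute tH bH := rel_tb
                rw [hc.inv_right.eq]
            _ = bH⁻¹ * (tH * aH * tH⁻¹) * tH := by group
            _ = bH⁻¹ * (bH * aH) * tH := by rw [rel_ta]
            _ = aH * tH := by group
        calc tH⁻¹ * aH * tH = tH⁻¹ * (aH * tH) := by group
          _ = tH⁻¹ * (tH * (bH⁻¹ * aH)) := by rw [h2]
          _ = bH⁻¹ * aH := by group
      simp [φ', ι_of_zero, MulAut.conj_apply, map_mul, map_inv, ι_of_one, ha]
    · have hb : tH⁻¹ * bH * tH = bH := by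
        calc tH⁻¹ * bH * tH = tH⁻¹ * (bH * tH) := by group
          _ = tH⁻¹ * (tH * bH) := by rw [← rel_tb]
          _ = bH := by group
      simp [φ', ι_of_one, MulAut.conj_apply, hb]
  have := congrFun (congrArg (·.toFun) this) v
  simpa [MulAut.conj_apply, mul_assoc] using this

lemma swap_t (p : ℤ) : ∀ v : F₂, ∃ v' : F₂, ι v * tH ^ p = tH ^ p * ι v' := by
  induction p using Int.induction_on with
  | zero => exact fun v => ⟨v, by simp⟩
  | succ p ih =>
    intro v
    obtain ⟨v', h⟩ := ih v
    refine ⟨φ' v', ?_⟩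
    calc ι v * tH ^ ((p : ℤ) + 1) = (ι v * tH ^ (p : ℤ)) * tH := by
          rw [zpow_add_one, mul_assoc]
      _ = tH ^ (p : ℤ) * ι v' * tH := by rw [h]
      _ = tH ^ (p : ℤ) * tH * (tH⁻¹ * ι v' * tH) := by group
      _ = tH ^ ((p : ℤ) + 1) * ι (φ' v') := by rw [conj_t', zpow_add_one]
  | pred p ih =>
    intro v
    obtain ⟨v', h⟩ := ih v
    refine ⟨φ v', ?_⟩
    calc ι v * tH ^ (-(p : ℤ) - 1) = (ι v * tH ^ (-(p : ℤ))) * tH⁻¹ := by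
          rw [zpow_sub_one, mul_assoc]
      _ = tH ^ (-(p : ℤ)) * ι v' * tH⁻¹ := by rw [h]
      _ = tH ^ (-(p : ℤ)) * tH⁻¹ * (tH * ι v' * tH⁻¹) := by group
      _ = tH ^ (-(p : ℤ) - 1) * ι (φ v') := by rw [conj_t, zpow_sub_one]

/-- The subgroup of elements of the form `t^p · ι(v)`. -/
def SH : Subgroup HGrp where
  carrier := {g | ∃ (p : ℤ) (v : F₂), g = tH ^ p * ι v}
  one_mem' := ⟨0, 1, by simp⟩
  mul_mem' := by
    rintro x y ⟨p, v, rfl⟩ ⟨p', v', rfl⟩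
    obtain ⟨v'', h⟩ := swap_t p' v
    exact ⟨p + p', v'' * v', by rw [map_mul, zpow_add, mul_assoc, ← mul_assoc (ι v), h]; group⟩
  inv_mem' := by
    rintro x ⟨p, v, rfl⟩
    obtain ⟨v'', h⟩ := swap_t (-p) v⁻¹
    exact ⟨-p, v'', by rw [mul_inv_rev, ← map_inv, ← zpow_neg, h]⟩

lemma exists_tp (g : HGrp) : ∃ (p : ℤ) (v : F₂), g = tH ^ p * ι v := by
  have := PresentedGroup.generated_by hRels SH ?_ g
  · exact this
  · intro j
    fin_cases j
    · exact ⟨0, FreeGroup.of 0, by rw [ι_of_zero]; simp [aH]⟩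
    · exact ⟨0, FreeGroup.of 1, by rw [ι_of_one]; simp [bH]⟩
    · exact ⟨1, 1, by simp [tH]⟩

lemma normal_form (g : HGrp) : ∃ (p q : ℤ) (w : F₂), NoLeadB w ∧ g = tH ^ p * bH ^ q * ι w := by
  obtain ⟨p, v, rfl⟩ := exists_tp g
  obtain ⟨q, w, hw, rfl⟩ := exists_decomp v
  exact ⟨p, q, w, hw, by rw [map_mul, map_zpow, ι_of_one, mul_assoc]⟩

lemma key (π : HGrp → ℤ)
    (hπ : ∀ (p q : ℤ) (w : F₂), NoLeadB w → π (tH ^ p * bH ^ q * ι w) = q) (g : HGrp) :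
    (∀ n : ℤ, π (g * bH ^ n) = π g + n) ↔ ∃ p q : ℤ, g = tH ^ p * bH ^ q := by
  constructor
  · intro h
    obtain ⟨p, q, w, hw, rfl⟩ := normal_form g
    by_cases h1 : w = 1
    · exact ⟨p, q, by rw [h1, map_one, mul_one]⟩
    · exfalso
      have e1 := h 1
      have hg : π (tH ^ p * bH ^ q * ι w) = q := hπ p q w hw
      have hg1 : π (tH ^ p * bH ^ q * ι w * bH ^ (1 : ℤ)) = q := by
        rw [zpow_one, ← ι_of_one, mul_assoc, ← map_mul]
        exact hπ p q _ (noLeadB_mul_b hw h1)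
      rw [e1, hg] at hg1
      omega
  · rintro ⟨p, q, rfl⟩ n
    have h0 : ∀ m : ℤ, π (tH ^ p * bH ^ m) = m := fun m => by
      have := hπ p m 1 noLeadB_one
      rwa [map_one, mul_one] at this
    rw [mul_assoc, ← zpow_add, h0, h0]

/-- Parallelism of cosets is symmetric: for any `π : H → ℤ` reading off the exponent `q`
in the normal form `t^p · b^q · ι(w)` and any `u, u' ∈ H`, the restriction of `π_u` to
`u'⟨b⟩` is a translation iff the restriction of `π_{u'}` to `u⟨b⟩` is a translation, iff
`u' = u · t^p · b^q` for some `p, q ∈ ℤ`. -/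
theorem parallel_symm (π : HGrp → ℤ)
    (hπ : ∀ (p q : ℤ) (w : F₂), NoLeadB w → π (tH ^ p * bH ^ q * ι w) = q)
    (u u' : HGrp) :
    ((∀ n : ℤ, π (u⁻¹ * u' * bH ^ n) = π (u⁻¹ * u') + n) ↔
      (∀ n : ℤ, π (u'⁻¹ * u * bH ^ n) = π (u'⁻¹ * u) + n)) ∧
    ((∀ n : ℤ, π (u⁻¹ * u' * bH ^ n) = π (u⁻¹ * u') + n) ↔
      (∃ p q : ℤ, u' = u * tH ^ p * bH ^ q)) := by
  have hcomm : Commute tH bH := rel_tb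
  have hinv : ∀ p q : ℤ, (tH ^ p * bH ^ q)⁻¹ = tH ^ (-p) * bH ^ (-q) := by
    intro p q
    rw [mul_inv_rev, ← zpow_neg, ← zpow_neg]
    exact ((hcomm.zpow_zpow (-p) (-q)).eq).symm
  have h3 : ∀ x y : HGrp, (∃ p q : ℤ, x⁻¹ * y = tH ^ p * bH ^ q) →
      (∃ p q : ℤ, y⁻¹ * x = tH ^ p * bH ^ q) := by
    rintro x y ⟨p, q, h⟩
    refine ⟨-p, -q, ?_⟩
    rw [← hinv, ← h]
    group
  have k1 := key π hπ (u⁻¹ * u')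
  have k2 := key π hπ (u'⁻¹ * u)
  constructor
  · rw [k1, k2]
    exact ⟨h3 u u', h3 u' u⟩
  · rw [k1]
    constructor
    · rintro ⟨p, q, h⟩
      exact ⟨p, q, by rw [mul_assoc, ← h]; group⟩
    · rintro ⟨p, q, h⟩
      exact ⟨p, q, by rw [h]; group⟩
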